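/- c₀^λ(F̂), equipped with the norm ‖x‖ = sup_n |F̄_n(x)|, is a Banach space (the norm is well-defined and complete). -/

import Mathlib

open Filter Finset

noncomputable def fibR : ℕ → ℝ
  | 0 => 1
  | 1 => 1
  | (n + 2) => fibR (n + 1) + fibR n

noncomputable def Fhat (x : ℕ → ℝ) (n : ℕ) : ℝ :=
  fibR n / fibR (n + 1) * x n - fibR (n + 1) / fibR n * (if n = 0 then 0 else x (n - 1))

noncomputable def Fbar (Λ : ℕ → ℝ) (x : ℕ → ℝ) (n : ℕ) : ℝ :=
  (1 / Λ n) * ∑ k ∈ Finset.range (n + 1),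
    (Λ k - if k = 0 then 0 else Λ (k - 1)) *
      (fibR k / fibR (k + 1) * x k -
        fibR (k + 1) / fibR k * (if k = 0 then 0 else x (k - 1)))

lemma fibR_pos : ∀ n, 0 < fibR n
  | 0 => by simp [fibR]
  | 1 => by simp [fibR]
  | (n + 2) => by
      have h1 := fibR_pos (n + 1)
      have h2 := fibR_pos n
      simp only [fibR]
      linarith

lemma Fbar_sub (Λ a b : ℕ → ℝ) (n : ℕ) :
    Fbar Λ (fun i => a i - b i) n = Fbar Λ a n - Fbar Λ b n := by
  simp only [Fbar]
  rw [← mul_sub, ← Finset.sum_sub_distrib]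
  congr 1
  apply Finset.sum_congr rfl
  intro k _
  by_cases hk : k = 0 <;> simp [hk] <;> ring

lemma telescope (g : ℕ → ℝ) (n : ℕ) :
    ∑ k ∈ Finset.range (n + 1), (g k - if k = 0 then 0 else g (k - 1)) = g n := by
  induction n with
  | zero => simp
  | succ n ih =>
      rw [Finset.sum_range_succ, ih]
      simp

noncomputable def xrec (t : ℕ → ℝ) : ℕ → ℝ
  | 0 => t 0
  | (n + 1) => (t (n + 1) + fibR (n + 2) / fibR (n + 1) * xrec t n) * (fibR (n + 2) / fibR (n + 1))

lemma xrec_spec (t : ℕ → ℝ) : ∀ k,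
    fibR k / fibR (k + 1) * xrec t k -
      fibR (k + 1) / fibR k * (if k = 0 then 0 else xrec t (k - 1)) = t k
  | 0 => by simp [xrec, fibR]
  | (k + 1) => by
      have h1 := fibR_pos (k + 1)
      have h2 := fibR_pos (k + 2)
      simp only [xrec, Nat.add_sub_cancel, if_neg (Nat.succ_ne_zero k)]
      field_simp
      ring

lemma exists_preimage (Λ : ℕ → ℝ) (hmono : StrictMono Λ) (hpos : ∀ k, 0 < Λ k)
    (y : ℕ → ℝ) : ∃ x : ℕ → ℝ, ∀ n, Fbar Λ x n = y n := by
  set D : ℕ → ℝ := fun k => Λ k - if k = 0 then 0 else Λ (k - 1) with hD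
  have hDpos : ∀ k, 0 < D k := by
    intro k
    cases k with
    | zero => simpa [hD] using hpos 0
    | succ k =>
        simp only [hD, if_neg (Nat.succ_ne_zero k), Nat.add_sub_cancel]
        have := hmono (Nat.lt_succ_self k)
        linarith
  set t : ℕ → ℝ := fun k =>
    (Λ k * y k - if k = 0 then 0 else Λ (k - 1) * y (k - 1)) / D k with ht
  refine ⟨xrec t, ?_⟩
  intro n
  have hsum : ∀ k, D k * (fibR k / fibR (k + 1) * xrec t k -
      fibR (k + 1) / fibR k * (if k = 0 then 0 else xrec t (k - 1))) =
      (fun m => Λ m * y m) k - if k = 0 then 0 else (fun m => Λ m * y m) (k - 1) := by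
    intro k
    rw [xrec_spec t k, ht]
    simp only
    rw [mul_div_cancel₀ _ (ne_of_gt (hDpos k))]
  have : Fbar Λ (xrec t) n = (1 / Λ n) * (Λ n * y n) := by
    simp only [Fbar]
    congr 1
    rw [← telescope (fun m => Λ m * y m) n]
    exact Finset.sum_congr rfl fun k _ => hsum k
  rw [this, one_div, inv_mul_cancel_left₀ (ne_of_gt (hpos n))]

theorem c0lambdaF_banach (Λ : ℕ → ℝ) (hmono : StrictMono Λ) (hpos : ∀ k, 0 < Λ k)
    (hlim : Tendsto Λ atTop atTop) :
    (∀ x : ℕ → ℝ, Tendsto (Fbar Λ x) atTop (nhds 0) → ∃ M : ℝ, ∀ n, |Fbar Λ x n| ≤ M) ∧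
    (∀ u : ℕ → (ℕ → ℝ), (∀ m, Tendsto (Fbar Λ (u m)) atTop (nhds 0)) →
      (∀ ε : ℝ, 0 < ε → ∃ N, ∀ p q, N ≤ p → N ≤ q →
        ∀ n, |Fbar Λ (fun i => u p i - u q i) n| ≤ ε) →
      ∃ x : ℕ → ℝ, Tendsto (Fbar Λ x) atTop (nhds 0) ∧
        ∀ ε : ℝ, 0 < ε → ∃ N, ∀ p, N ≤ p →
          ∀ n, |Fbar Λ (fun i => u p i - x i) n| ≤ ε) := by
  constructor
  · -- boundedness of convergent sequences
    intro x hx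
    rw [Metric.tendsto_atTop] at hx
    obtain ⟨N, hN⟩ := hx 1 one_pos
    refine ⟨1 + ∑ i ∈ Finset.range N, |Fbar Λ x i|, fun n => ?_⟩
    by_cases h : n < N
    · have h1 : |Fbar Λ x n| ≤ ∑ i ∈ Finset.range N, |Fbar Λ x i| :=
        Finset.single_le_sum (f := fun i => |Fbar Λ x i|)
          (fun i _ => abs_nonneg _) (Finset.mem_range.mpr h)
      linarith
    · have h1 := hN n (le_of_not_gt h)
      rw [Real.dist_eq, sub_zero] at h1
      have h2 : (0:ℝ) ≤ ∑ i ∈ Finset.range N, |Fbar Λ x i| :=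
        Finset.sum_nonneg fun i _ => abs_nonneg _
      linarith
  · intro u hu hcauchy
    -- pointwise Cauchy
    have hC : ∀ n, CauchySeq (fun m => Fbar Λ (u m) n) := by
      intro n
      rw [Metric.cauchySeq_iff]
      intro ε hε
      obtain ⟨N, hN⟩ := hcauchy (ε / 2) (half_pos hε)
      refine ⟨N, fun p hp q hq => ?_⟩
      have := hN p q hp hq n
      rw [Fbar_sub] at this
      rw [Real.dist_eq]
      linarith
    have hlimpt : ∀ n, ∃ L, Tendsto (fun m => Fbar Λ (u m) n) atTop (nhds L) :=
      fun n => cauchySeq_tendsto_of_complete (hC n)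
    choose y hy using hlimpt
    -- uniform approximation
    have hunif : ∀ ε : ℝ, 0 < ε → ∃ N, ∀ q, N ≤ q → ∀ n, |Fbar Λ (u q) n - y n| ≤ ε := by
      intro ε hε
      obtain ⟨N, hN⟩ := hcauchy ε hε
      refine ⟨N, fun q hq n => ?_⟩
      have htend : Tendsto (fun p => |Fbar Λ (u p) n - Fbar Λ (u q) n|) atTop
          (nhds |y n - Fbar Λ (u q) n|) := ((hy n).sub tendsto_const_nhds).abs
      have hbd : ∀ᶠ p in atTop, |Fbar Λ (u p) n - Fbar Λ (u q) n| ≤ ε := by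
        filter_upwards [eventually_ge_atTop N] with p hp
        have := hN p q hp hq n
        rwa [Fbar_sub] at this
      have := le_of_tendsto htend hbd
      rwa [abs_sub_comm] at this
    -- y tends to 0
    have hy0 : Tendsto y atTop (nhds 0) := by
      rw [Metric.tendsto_atTop]
      intro ε hε
      obtain ⟨N1, hN1⟩ := hunif (ε / 3) (by linarith)
      have := hu N1
      rw [Metric.tendsto_atTop] at this
      obtain ⟨N2, hN2⟩ := this (ε / 3) (by linarith)
      refine ⟨N2, fun n hn => ?_⟩
      have h1 := hN1 N1 le_rfl n
      have h2 := hN2 n hn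
      rw [Real.dist_eq, sub_zero] at h2 ⊢
      calc |y n| = |(y n - Fbar Λ (u N1) n) + Fbar Λ (u N1) n| := by ring_nf
        _ ≤ |y n - Fbar Λ (u N1) n| + |Fbar Λ (u N1) n| := abs_add_le _ _
        _ ≤ ε / 3 + ε / 3 := by rw [abs_sub_comm]; linarith
        _ < ε := by linarith
    obtain ⟨x, hxy⟩ := exists_preimage Λ hmono hpos y
    have hFx : Fbar Λ x = y := funext hxy
    refine ⟨x, by rw [hFx]; exact hy0, ?_⟩
    intro ε hε
    obtain ⟨N, hN⟩ := hunif ε hε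
    refine ⟨N, fun p hp n => ?_⟩
    rw [Fbar_sub, hxy n]
    exact hN p hp n
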